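/- Let n ≥ 0 and let P be a homogeneous polynomial of degree n+2 in the n+1 real variables y₀,…,y_n. Suppose that P, together with all of its iterated partial derivatives of order ≤ n, vanishes at every standard coordinate basis point e₀,…,e_n of ℝ^{n+1} (where e_i has i-th coordinate 1 and all others 0). Then P is identically zero. -/

import Mathlib

open MvPolynomial Finsupp

noncomputable def kfac {ι : Type*} [DecidableEq ι] : List ι → (ι →₀ ℕ) → ℝ
  | [], _ => 1
  | v :: L, u => kfac L u * (((u - Multiset.toFinsupp (↑L : Multiset ι)) v : ℕ) : ℝ)

lemma foldr_pderiv_monomial {ι : Type*} [DecidableEq ι] (L : List ι) (u : ι →₀ ℕ) (c : ℝ) :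
    L.foldr (fun v Q => MvPolynomial.pderiv v Q) (monomial u c)
      = monomial (u - Multiset.toFinsupp (↑L : Multiset ι)) (c * kfac L u) := by
  induction L with
  | nil => simp [kfac]
  | cons v L ih =>
      rw [List.foldr_cons, ih, pderiv_monomial]
      have h1 : Multiset.toFinsupp (↑(v :: L) : Multiset ι)
          = Multiset.toFinsupp (↑L : Multiset ι) + Finsupp.single v 1 := by
        ext a
        simp [Multiset.toFinsupp_apply, List.count_cons, Finsupp.single_apply]
      rw [h1, kfac, tsub_add_eq_tsub_tsub, mul_assoc]

lemma cons_toFinsupp {ι : Type*} [DecidableEq ι] (v : ι) (L : List ι) :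
    Multiset.toFinsupp (↑(v :: L) : Multiset ι)
      = Multiset.toFinsupp (↑L : Multiset ι) + Finsupp.single v 1 := by
  ext a
  simp [Multiset.toFinsupp_apply, List.count_cons, Finsupp.single_apply]

lemma kfac_ne_zero_imp {ι : Type*} [DecidableEq ι] (L : List ι) (u : ι →₀ ℕ)
    (h : kfac L u ≠ 0) : Multiset.toFinsupp (↑L : Multiset ι) ≤ u := by
  induction L with
  | nil => simp
  | cons v L ih =>
      rw [kfac, mul_ne_zero_iff] at h
      have h1 := ih h.1
      have h2 : (u - Multiset.toFinsupp (↑L : Multiset ι)) v ≠ 0 := by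
        exact_mod_cast fun hh => h.2 (by rw [hh]; simp)
      rw [Finsupp.tsub_apply] at h2
      rw [cons_toFinsupp]
      intro a
      rw [Finsupp.add_apply, Finsupp.single_apply]
      have h1a := h1 a
      by_cases ha : v = a
      · subst ha
        simp only [if_pos rfl, ite_true]
        omega
      · simp only [if_neg ha]
        omega

lemma kfac_ne_zero {ι : Type*} [DecidableEq ι] (L : List ι) (u : ι →₀ ℕ)
    (h : Multiset.toFinsupp (↑L : Multiset ι) ≤ u) : kfac L u ≠ 0 := by
  induction L with
  | nil => simp [kfac]
  | cons v L ih =>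
      rw [cons_toFinsupp] at h
      have hle : Multiset.toFinsupp (↑L : Multiset ι)
          ≤ Multiset.toFinsupp (↑L : Multiset ι) + Finsupp.single v 1 := le_add_of_nonneg_right zero_le
      rw [kfac, mul_ne_zero_iff]
      refine ⟨ih (hle.trans h), ?_⟩
      have h2 : (Multiset.toFinsupp (↑L : Multiset ι)) v < u v := by
        have := h v
        rw [Finsupp.add_apply, Finsupp.single_apply, if_pos rfl] at this
        omega
      rw [Finsupp.tsub_apply]
      exact_mod_cast Nat.sub_ne_zero_of_lt h2

lemma foldr_pderiv_sum {ι σ : Type*} (L : List ι) (s : Finset σ) (f : σ → MvPolynomial ι ℝ) :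
    L.foldr (fun v Q => MvPolynomial.pderiv v Q) (∑ x ∈ s, f x)
      = ∑ x ∈ s, L.foldr (fun v Q => MvPolynomial.pderiv v Q) (f x) := by
  induction L with
  | nil => rfl
  | cons v L ih => simp [ih, map_sum]

/-- A homogeneous polynomial `P` of degree `n + 2` in `n + 1` variables
all of whose iterated partial derivatives of order ≤ n (including `P` itself, given by the
empty list) vanish at every standard basis point of `ℝ^{n+1}` is identically zero.
Iterated partial derivatives are encoded by lists of variable indices. -/
theorem stmt_8 (n : ℕ) (P : MvPolynomial (Fin (n + 1)) ℝ)
    (hP : P.IsHomogeneous (n + 2))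
    (hvan : ∀ L : List (Fin (n + 1)), L.length ≤ n →
      ∀ i : Fin (n + 1),
        MvPolynomial.eval (fun j => if j = i then (1 : ℝ) else 0)
          (L.foldr (fun v Q => MvPolynomial.pderiv v Q) P) = 0) :
    P = 0 := by
  have hdeg' : ∀ u : Fin (n + 1) →₀ ℕ, MvPolynomial.coeff u P ≠ 0 →
      ∑ j, u j = n + 2 := by
    intro u hu
    have h : u.degree = n + 2 := by
      by_contra h; exact hu (hP.coeff_eq_zero h)
    rw [← h, Finsupp.degree]
    exact (Finset.sum_subset (Finset.subset_univ _)
      fun x _ hx => Finsupp.notMem_support_iff.mp hx).symm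
  have hsplit : ∀ (i : Fin (n + 1)) (w : Fin (n + 1) →₀ ℕ),
      ∑ j, w j = w i + ∑ j ∈ Finset.univ.erase i, w j := by
    intro i w
    exact (Finset.add_sum_erase _ _ (Finset.mem_univ i)).symm
  ext d
  rw [MvPolynomial.coeff_zero]
  by_contra hd
  have hsum : ∑ j, d j = n + 2 := hdeg' d hd
  obtain ⟨i, hi⟩ : ∃ i, 2 ≤ d i := by
    by_contra h
    push_neg at h
    have h2 : ∑ j, d j ≤ ∑ _j : Fin (n + 1), 1 :=
      Finset.sum_le_sum fun j _ => Nat.lt_succ_iff.mp (h j)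
    simp only [Finset.sum_const, Finset.card_univ, Fintype.card_fin, smul_eq_mul,
      mul_one, hsum] at h2
    omega
  classical
  set ν : Fin (n + 1) →₀ ℕ := d.erase i with hν
  have hνi : ν i = 0 := Finsupp.erase_same
  have hνne : ∀ j, j ≠ i → ν j = d j := fun j hj => Finsupp.erase_ne hj
  set L : List (Fin (n + 1)) := (Finsupp.toMultiset ν).toList with hL
  have hLf : Multiset.toFinsupp (↑L : Multiset (Fin (n + 1))) = ν := by
    rw [hL, Multiset.coe_toList, Finsupp.toMultiset_toFinsupp]
  have hνle : ν ≤ d := by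
    intro a
    by_cases ha : a = i
    · subst ha; simp [hνi]
    · rw [hνne a ha]
  have hνsum : ∑ j, ν j + d i = n + 2 := by
    have h1 : ∑ j ∈ Finset.univ.erase i, ν j = ∑ j ∈ Finset.univ.erase i, d j :=
      Finset.sum_congr rfl fun j hj => hνne j (Finset.ne_of_mem_erase hj)
    have h2 := hsplit i d
    have h3 := hsplit i ν
    omega
  have hlen : L.length ≤ n := by
    have hc : L.length = ∑ j, ν j := by
      rw [hL, Multiset.length_toList, Finsupp.card_toMultiset]
      rw [Finsupp.sum]
      exact Finset.sum_subset (Finset.subset_univ _)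
        fun x _ hx => Finsupp.notMem_support_iff.mp hx
    omega
  have hdν : d - ν = Finsupp.single i (d i) := by
    ext a
    rw [Finsupp.tsub_apply, Finsupp.single_apply]
    by_cases ha : a = i
    · subst ha; simp [hνi]
    · rw [hνne a ha]; simp [Ne.symm ha]
  have hEval : MvPolynomial.eval (fun j => if j = i then (1 : ℝ) else 0)
      (L.foldr (fun v Q => MvPolynomial.pderiv v Q) P)
      = MvPolynomial.coeff d P * kfac L d := by
    conv_lhs => rw [P.as_sum]
    rw [foldr_pderiv_sum, map_sum, Finset.sum_eq_single d]
    · rw [foldr_pderiv_monomial, hLf, hdν, MvPolynomial.eval_monomial,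
        Finsupp.prod_single_index]
      · simp
      · simp
    · intro u hu hud
      rw [foldr_pderiv_monomial, hLf]
      by_cases hk : kfac L u = 0
      · simp [hk]
      · have hle : ν ≤ u := by
          rw [← hLf]; exact kfac_ne_zero_imp L u hk
        obtain ⟨j, hji, hjlt⟩ : ∃ j, j ≠ i ∧ ν j < u j := by
          by_contra hcon
          push_neg at hcon
          have heq : ∀ j, j ≠ i → u j = d j := by
            intro j hj
            have h1 := hcon j hj
            have h2 := hle j
            rw [hνne j hj] at h1 h2
            omega
          have hsum_u : ∑ j, u j = n + 2 :=
            hdeg' u (MvPolynomial.mem_support_iff.mp hu)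
          have hui : u i = d i := by
            have h3 : ∑ j ∈ Finset.univ.erase i, u j = ∑ j ∈ Finset.univ.erase i, d j :=
              Finset.sum_congr rfl fun j hj => heq j (Finset.ne_of_mem_erase hj)
            have h4 := hsplit i u
            have h5 := hsplit i d
            omega
          exact hud (Finsupp.ext fun j => by
            by_cases hj : j = i
            · subst hj; exact hui
            · exact heq j hj)
        rw [MvPolynomial.eval_monomial, Finsupp.prod]
        have hjs : j ∈ (u - ν).support := by
          rw [Finsupp.mem_support_iff, Finsupp.tsub_apply]
          omega
        rw [Finset.prod_eq_zero hjs]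
        · ring
        · rw [if_neg hji, Finsupp.tsub_apply]
          exact zero_pow (by omega)
    · intro h
      exact absurd (MvPolynomial.mem_support_iff.mpr hd) h
  have hz := hvan L hlen i
  rw [hEval] at hz
  have hk := kfac_ne_zero L d (by rw [hLf]; exact hνle)
  rcases mul_eq_zero.mp hz with h | h
  · exact hd h
  · exact hk h
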